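/- (Characterization of the optimal index function, forward direction of Result 3's proof.) Suppose the efficiency setup holds and h̃ is an admissible index function such that for every admissible index function h, −E[h(V) Dᵀ] = E[M² h(V) h̃(V)ᵀ] as p×p matrices. Then E[M² h̃(V) + D | σ(V)] = 0 P-a.s. (componentwise); consequently, if E[M² | σ(V)] > 0 P-a.s., then h̃(V) = −E[D | σ(V)] · (E[M² | σ(V)])⁻¹ P-a.s. -/

import Mathlib

open MeasureTheory Matrix

/-- Characterization of the optimal index function (forward direction of
Result 3's proof). If `h̃` is admissible and `−E[h(V) Dᵀ] = E[M² h(V) h̃(V)ᵀ]` for every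
admissible `h`, then `E[M² h̃(V) + D | σ(V)] = 0` a.s. componentwise; consequently, if
`E[M² | σ(V)] > 0` a.s., then `h̃(V) = −E[D | σ(V)] (E[M² | σ(V)])⁻¹` a.s. -/
theorem optimal_index_characterization
    {Ω : Type*} [mΩ : MeasurableSpace Ω] {P : Measure Ω} [IsProbabilityMeasure P]
    {𝒱 : Type*} [m𝒱 : MeasurableSpace 𝒱]
    (V : Ω → 𝒱) (hV : Measurable V)
    (p : ℕ)
    (M : Ω → ℝ) (hM : Measurable M) (hM2 : MemLp M 2 P)
    (D : Ω → Fin p → ℝ) (hD : Measurable D)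
    (hD2 : ∀ i, MemLp (fun ω => D ω i) 2 P)
    (ht : 𝒱 → Fin p → ℝ) (hht : Measurable ht)
    (Ct : ℝ) (htbdd : ∀ v, ‖ht v‖ ≤ Ct)
    -- `−E[h(V) Dᵀ] = E[M² h(V) h̃(V)ᵀ]` for every admissible index function `h`
    (hopt : ∀ (h : 𝒱 → Fin p → ℝ), Measurable h → (∃ C : ℝ, ∀ v, ‖h v‖ ≤ C) →
      ∀ i j, -∫ ω, h (V ω) i * D ω j ∂P = ∫ ω, (M ω) ^ 2 * (h (V ω) i * ht (V ω) j) ∂P) :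
    (∀ i, P[fun ω => (M ω) ^ 2 * ht (V ω) i + D ω i | MeasurableSpace.comap V m𝒱]
        =ᵐ[P] 0) ∧
      ((∀ᵐ ω ∂P, 0 < (P[fun ω' => (M ω') ^ 2 | MeasurableSpace.comap V m𝒱]) ω) →
        ∀ i, (fun ω => ht (V ω) i)
          =ᵐ[P] fun ω => -(P[fun ω' => D ω' i | MeasurableSpace.comap V m𝒱]) ω
            / (P[fun ω' => (M ω') ^ 2 | MeasurableSpace.comap V m𝒱]) ω) := by
  classical
  have hm : MeasurableSpace.comap V m𝒱 ≤ mΩ := hV.comap_le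
  -- basic integrabilities
  have hMsq : Integrable (fun ω => (M ω) ^ 2) P := hM2.integrable_sq
  have hhti : ∀ i : Fin p, ∀ v, |ht v i| ≤ Ct := fun i v =>
    le_trans (norm_le_pi_norm (ht v) i) (htbdd v)
  have hhtVmeas : ∀ i : Fin p, Measurable (fun ω => ht (V ω) i) :=
    fun i => ((measurable_pi_apply i).comp hht).comp hV
  have g1 : ∀ i, Integrable (fun ω => (M ω) ^ 2 * ht (V ω) i) P := by
    intro i
    have := hMsq.bdd_mul ((hhtVmeas i).aestronglyMeasurable) (Filter.Eventually.of_forall fun ω => by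
      simpa [Real.norm_eq_abs] using hhti i (V ω))
    simpa [mul_comm] using this
  have Di : ∀ i, Integrable (fun ω => D ω i) P :=
    fun i => (hD2 i).integrable one_le_two
  -- key set-integral identity
  have key : ∀ (i : Fin p) (t : Set 𝒱), MeasurableSet t →
      ∫ ω in V ⁻¹' t, ((M ω) ^ 2 * ht (V ω) i + D ω i) ∂P = 0 := by
    intro i t htmeas
    set g : 𝒱 → ℝ := fun v => t.indicator (fun _ => (1:ℝ)) v with hg
    have hgmeas : Measurable g := (measurable_const.indicator htmeas)
    have hgbd : ∀ v, |g v| ≤ 1 := by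
      intro v
      by_cases hv : v ∈ t <;> simp [hg, Set.indicator_apply, hv]
    have hmeas : Measurable (fun v => fun _ : Fin p => g v) :=
      measurable_pi_lambda _ (fun _ => hgmeas)
    have hbdd : ∀ v, ‖(fun _ : Fin p => g v)‖ ≤ 1 := by
      intro v
      refine (pi_norm_le_iff_of_nonneg zero_le_one).2 fun j => ?_
      simpa [Real.norm_eq_abs] using hgbd v
    have hid := hopt (fun v _ => g v) hmeas ⟨1, hbdd⟩ i i
    have hint1 : Integrable (fun ω => g (V ω) * ((M ω) ^ 2 * ht (V ω) i)) P :=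
      (g1 i).bdd_mul ((hgmeas.comp hV).aestronglyMeasurable)
        (Filter.Eventually.of_forall fun ω => by simpa [Real.norm_eq_abs] using hgbd (V ω))
    have hint2 : Integrable (fun ω => g (V ω) * D ω i) P :=
      (Di i).bdd_mul ((hgmeas.comp hV).aestronglyMeasurable)
        (Filter.Eventually.of_forall fun ω => by simpa [Real.norm_eq_abs] using hgbd (V ω))
    have hindic : ∫ ω in V ⁻¹' t, ((M ω) ^ 2 * ht (V ω) i + D ω i) ∂P
        = ∫ ω, g (V ω) * ((M ω) ^ 2 * ht (V ω) i + D ω i) ∂P := by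
      rw [← integral_indicator (hV htmeas)]
      congr 1
      funext ω
      by_cases hω : V ω ∈ t <;>
        simp [Set.indicator_apply, hg, hω]
    rw [hindic]
    have hsplit : ∫ ω, g (V ω) * ((M ω) ^ 2 * ht (V ω) i + D ω i) ∂P
        = (∫ ω, g (V ω) * ((M ω) ^ 2 * ht (V ω) i) ∂P)
          + ∫ ω, g (V ω) * D ω i ∂P := by
      rw [← integral_add hint1 hint2]
      congr 1; funext ω; ring
    rw [hsplit]
    have h1 : ∫ ω, g (V ω) * ((M ω) ^ 2 * ht (V ω) i) ∂P
        = ∫ ω, (M ω) ^ 2 * (g (V ω) * ht (V ω) i) ∂P := by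
      congr 1; funext ω; ring
    rw [h1, ← hid]
    ring
  have part1 : ∀ i, P[fun ω => (M ω) ^ 2 * ht (V ω) i + D ω i |
      MeasurableSpace.comap V m𝒱] =ᵐ[P] 0 := by
    intro i
    have hfint : Integrable (fun ω => (M ω) ^ 2 * ht (V ω) i + D ω i) P :=
      (g1 i).add (Di i)
    refine (ae_eq_condExp_of_forall_setIntegral_eq hm hfint
      (fun s _ _ => integrableOn_zero) ?_ ?_).symm
    · intro s hs _
      obtain ⟨t, htmeas, rfl⟩ := hs
      simp [key i t htmeas]
    · exact stronglyMeasurable_const.aestronglyMeasurable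
  refine ⟨part1, ?_⟩
  intro hpos i
  -- pull out ht(V)i from the conditional expectation
  have hhtm : StronglyMeasurable[MeasurableSpace.comap V m𝒱] (fun ω => ht (V ω) i) := by
    have hVm : Measurable[MeasurableSpace.comap V m𝒱] V := fun t ht' => ⟨t, ht', rfl⟩
    exact (((measurable_pi_apply i).comp hht).comp hVm).stronglyMeasurable
  have hfun : (fun ω => (M ω) ^ 2 * ht (V ω) i) = fun ω => ht (V ω) i * (M ω) ^ 2 := by
    funext ω; ring
  have hpull : P[fun ω => ht (V ω) i * (M ω) ^ 2 | MeasurableSpace.comap V m𝒱]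
      =ᵐ[P] fun ω => ht (V ω) i
        * (P[fun ω' => (M ω') ^ 2 | MeasurableSpace.comap V m𝒱]) ω :=
    condExp_mul_of_stronglyMeasurable_left hhtm
      (show Integrable (fun ω => ht (V ω) i * (M ω) ^ 2) P by rw [← hfun]; exact g1 i) hMsq
  have hadd : P[fun ω => (M ω) ^ 2 * ht (V ω) i + D ω i | MeasurableSpace.comap V m𝒱]
      =ᵐ[P] P[fun ω => (M ω) ^ 2 * ht (V ω) i | MeasurableSpace.comap V m𝒱]
        + P[fun ω => D ω i | MeasurableSpace.comap V m𝒱] :=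
    condExp_add (g1 i) (Di i) _
  rw [hfun] at hadd
  have hzero := part1 i
  filter_upwards [hzero, hadd, hpull, hpos] with ω h0 ha hp hpω
  have hsum : ht (V ω) i * (P[fun ω' => (M ω') ^ 2 | MeasurableSpace.comap V m𝒱]) ω
      + (P[fun ω' => D ω' i | MeasurableSpace.comap V m𝒱]) ω = 0 := by
    have := ha.symm.trans h0
    simp only [Pi.add_apply, Pi.zero_apply] at this
    rw [hp] at this
    linarith [this]
  have hne : (P[fun ω' => (M ω') ^ 2 | MeasurableSpace.comap V m𝒱]) ω ≠ 0 := ne_of_gt hpω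
  field_simp
  linarith [hsum]
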